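/- For p ≥ 1, there are exactly three order-decreasing, order-reversing partial isometries of the chain {1,...,2p} with image of size p. -/

import Mathlib

/-- Partial maps on ℕ; `none` means undefined. -/
def PDom (α : ℕ → Option ℕ) : Set ℕ := {x | α x ≠ none}
def PImg (α : ℕ → Option ℕ) : Set ℕ := {y | ∃ x, α x = some y}
def PFix (α : ℕ → Option ℕ) : Set ℕ := {x | α x = some x}

/-- `α` is a partial injective isometry of the chain {1,…,n}. -/
def PIso (n : ℕ) (α : ℕ → Option ℕ) : Prop :=
  (∀ x, α x ≠ none → x ∈ Set.Icc 1 n) ∧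
  (∀ x y, α x = some y → y ∈ Set.Icc 1 n) ∧
  (∀ x y a, α x = some a → α y = some a → x = y) ∧
  (∀ x y a b, α x = some a → α y = some b →
    ((a : ℤ) - (b : ℤ)).natAbs = ((x : ℤ) - (y : ℤ)).natAbs)

/-- order-decreasing -/
def PDecr (α : ℕ → Option ℕ) : Prop := ∀ x a, α x = some a → a ≤ x

/-- order-preserving -/
def POPres (α : ℕ → Option ℕ) : Prop :=
  ∀ x y a b, α x = some a → α y = some b → x ≤ y → a ≤ b

/-- order-reversing -/
def PORev (α : ℕ → Option ℕ) : Prop :=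
  ∀ x y a b, α x = some a → α y = some b → x ≤ y → b ≤ a

def fc (c lo hi : ℕ) : ℕ → Option ℕ :=
  fun x => if lo ≤ x ∧ x ≤ hi then some (c - x) else none

lemma fc_mem (c lo hi x a : ℕ) :
    fc c lo hi x = some a ↔ (lo ≤ x ∧ x ≤ hi ∧ a = c - x) := by
  unfold fc; split <;> simp_all <;> omega

lemma ncard_Icc' (a b : ℕ) : (Set.Icc a b).ncard = b + 1 - a := by
  rw [← Finset.coe_Icc, Set.ncard_coe_finset, Nat.card_Icc]

lemma fc_sat (p c lo hi : ℕ) (h1 : 1 ≤ lo) (hlo : lo ≤ hi) (h2 : hi ≤ 2*p)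
    (h3 : hi < c) (h4 : c ≤ lo + 2*p) (h5 : c ≤ 2*lo) (h6 : hi + 1 - lo = p) :
    PIso (2*p) (fc c lo hi) ∧ PDecr (fc c lo hi) ∧ PORev (fc c lo hi) ∧
      (PImg (fc c lo hi)).ncard = p := by
  have himg : PImg (fc c lo hi) = Set.Icc (c - hi) (c - lo) := by
    ext y
    simp only [PImg, Set.mem_setOf_eq, Set.mem_Icc]
    constructor
    · rintro ⟨x, hx⟩; rw [fc_mem] at hx; omega
    · intro hy; exact ⟨c - y, by rw [fc_mem]; omega⟩
  refine ⟨⟨?_, ?_, ?_, ?_⟩, ?_, ?_, ?_⟩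
  · intro x hx
    have : ∃ a, fc c lo hi x = some a := by
      cases h : fc c lo hi x
      · exact absurd h hx
      · exact ⟨_, rfl⟩
    obtain ⟨a, ha⟩ := this
    rw [fc_mem] at ha
    simp only [Set.mem_Icc]; omega
  · intro x a ha; rw [fc_mem] at ha; simp only [Set.mem_Icc]; omega
  · intro x y a ha hb; rw [fc_mem] at ha hb; omega
  · intro x y a b ha hb; rw [fc_mem] at ha hb; omega
  · intro x a ha; rw [fc_mem] at ha; omega
  · intro x y a b ha hb hxy; rw [fc_mem] at ha hb; omega
  · rw [himg, ncard_Icc']; omega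

lemma eq_fc {α : ℕ → Option ℕ} {c lo hi : ℕ} (hD : PDom α = Set.Icc lo hi)
    (hk : ∀ x a, α x = some a → a + x = c) : α = fc c lo hi := by
  funext x
  by_cases hx : lo ≤ x ∧ x ≤ hi
  · have hxD : x ∈ PDom α := by rw [hD]; simp only [Set.mem_Icc]; exact hx
    obtain ⟨a, ha⟩ : ∃ a, α x = some a := by
      cases h : α x
      · exact absurd h hxD
      · exact ⟨_, rfl⟩
    have := hk x a ha
    rw [ha]; unfold fc; rw [if_pos hx]
    congr 1; omega
  · have hxD : x ∉ PDom α := by rw [hD]; simpa only [Set.mem_Icc] using hx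
    have hn : α x = none := by
      by_contra h; exact hxD h
    rw [hn]; unfold fc; rw [if_neg hx]

lemma hard (p : ℕ) (hp : 1 ≤ p) (α : ℕ → Option ℕ)
    (h : PIso (2*p) α ∧ PDecr α ∧ PORev α ∧ (PImg α).ncard = p) :
    α = fc (2*p) p (2*p-1) ∨ α = fc (2*p+1) (p+1) (2*p) ∨ α = fc (2*p+2) (p+1) (2*p) := by
  obtain ⟨⟨hdom, himg, hinj, hiso⟩, hdec, hrev, hcard⟩ := h
  have himg_eq : PImg α = (fun x => (α x).getD 0) '' PDom α := by
    ext y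
    simp only [PImg, PDom, Set.mem_setOf_eq, Set.mem_image]
    constructor
    · rintro ⟨x, hx⟩; exact ⟨x, by rw [hx]; simp, by rw [hx]; rfl⟩
    · rintro ⟨x, hx1, hx2⟩
      cases h' : α x with
      | none => exact absurd h' hx1
      | some a => exact ⟨x, by rw [h']; rw [h'] at hx2; simpa using hx2⟩
  have hinjOn : Set.InjOn (fun x => (α x).getD 0) (PDom α) := by
    intro x hx y hy hxy
    simp only [PDom, Set.mem_setOf_eq] at hx hy
    cases hax : α x with
    | none => exact absurd hax hx
    | some a =>
      cases hay : α y with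
      | none => exact absurd hay hy
      | some b =>
        simp only [hax, hay, Option.getD_some] at hxy
        exact hinj x y a (by rw [hax]) (by rw [hay, hxy])
  have hDcard : (PDom α).ncard = p := by
    rw [himg_eq, Set.ncard_image_of_injOn hinjOn] at hcard
    exact hcard
  have hDne : (PDom α).Nonempty := Set.nonempty_of_ncard_ne_zero (by omega)
  obtain ⟨x₀, hx₀⟩ := hDne
  obtain ⟨a₀, hax₀⟩ : ∃ a, α x₀ = some a := by
    cases h' : α x₀
    · exact absurd h' hx₀
    · exact ⟨_, rfl⟩
  set c := a₀ + x₀ with hc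
  have key : ∀ x a, α x = some a →
      a + x = c ∧ 1 ≤ x ∧ x ≤ 2*p ∧ 1 ≤ a ∧ a ≤ 2*p ∧ a ≤ x := by
    intro x a hxa
    have h1 := hdom x (by rw [hxa]; simp)
    have h2 := himg x a hxa
    have h3 := hiso x x₀ a a₀ hxa hax₀
    have hd := hdec x a hxa
    simp only [Set.mem_Icc] at h1 h2
    rcases le_total x x₀ with hle | hle
    · have := hrev x x₀ a a₀ hxa hax₀ hle
      exact ⟨by omega, h1.1, h1.2, h2.1, h2.2, hd⟩
    · have := hrev x₀ x a₀ a hax₀ hxa hle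
      exact ⟨by omega, h1.1, h1.2, h2.1, h2.2, hd⟩
  have hc2 : 2 ≤ c := by
    have := key x₀ a₀ hax₀; omega
  have hclow : 2*p ≤ c := by
    by_contra hcon
    push_neg at hcon
    have hsub : PDom α ⊆ Set.Icc ((c+1)/2) (c-1) := by
      intro x hx
      obtain ⟨a, ha⟩ : ∃ a, α x = some a := by
        cases h' : α x
        · exact absurd h' hx
        · exact ⟨_, rfl⟩
      have := key x a ha
      simp only [Set.mem_Icc]; omega
    have := Set.ncard_le_ncard hsub (Set.finite_Icc _ _)
    rw [hDcard, ncard_Icc'] at this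
    omega
  have hchigh : c ≤ 2*p + 2 := by
    by_contra hcon
    push_neg at hcon
    have hsub : PDom α ⊆ Set.Icc (p+2) (2*p) := by
      intro x hx
      obtain ⟨a, ha⟩ : ∃ a, α x = some a := by
        cases h' : α x
        · exact absurd h' hx
        · exact ⟨_, rfl⟩
      have := key x a ha
      simp only [Set.mem_Icc]; omega
    have := Set.ncard_le_ncard hsub (Set.finite_Icc _ _)
    rw [hDcard, ncard_Icc'] at this
    omega
  have hkey' : ∀ x a, α x = some a → a + x = c := fun x a ha => (key x a ha).1
  have hDsub : ∀ lo hi : ℕ, (∀ x a, α x = some a → lo ≤ x ∧ x ≤ hi) →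
      hi + 1 - lo = p → PDom α = Set.Icc lo hi := by
    intro lo hi hb hsz
    refine Set.eq_of_subset_of_ncard_le ?_ ?_ (Set.finite_Icc _ _)
    · intro x hx
      obtain ⟨a, ha⟩ : ∃ a, α x = some a := by
        cases h' : α x
        · exact absurd h' hx
        · exact ⟨_, rfl⟩
      have := hb x a ha
      simp only [Set.mem_Icc]; omega
    · rw [hDcard, ncard_Icc']; omega
  rcases (by omega : c = 2*p ∨ c = 2*p+1 ∨ c = 2*p+2) with hcc | hcc | hcc
  · left
    refine eq_fc (hDsub p (2*p-1) ?_ (by omega)) (fun x a ha => by have := hkey' x a ha; omega)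
    intro x a ha; have := key x a ha; omega
  · right; left
    refine eq_fc (hDsub (p+1) (2*p) ?_ (by omega)) (fun x a ha => by have := hkey' x a ha; omega)
    intro x a ha; have := key x a ha; omega
  · right; right
    refine eq_fc (hDsub (p+1) (2*p) ?_ (by omega)) (fun x a ha => by have := hkey' x a ha; omega)
    intro x a ha; have := key x a ha; omega

/-- For p ≥ 1, there are exactly three order-decreasing, order-reversing partial
isometries of {1,…,2p} with image of size p. -/
theorem ddpstar_even_top_height (p : ℕ) (hp : 1 ≤ p) :
    Nat.card {α : ℕ → Option ℕ //
      PIso (2 * p) α ∧ PDecr α ∧ PORev α ∧ (PImg α).ncard = p} = 3 := by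
  have hset : {α : ℕ → Option ℕ | PIso (2 * p) α ∧ PDecr α ∧ PORev α ∧ (PImg α).ncard = p}
      = {fc (2*p) p (2*p-1), fc (2*p+1) (p+1) (2*p), fc (2*p+2) (p+1) (2*p)} := by
    ext α
    simp only [Set.mem_setOf_eq, Set.mem_insert_iff, Set.mem_singleton_iff]
    constructor
    · exact hard p hp α
    · rintro (rfl | rfl | rfl)
      · exact fc_sat p (2*p) p (2*p-1) (by omega) (by omega) (by omega) (by omega)
          (by omega) (by omega) (by omega)
      · exact fc_sat p (2*p+1) (p+1) (2*p) (by omega) (by omega) (by omega) (by omega)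
          (by omega) (by omega) (by omega)
      · exact fc_sat p (2*p+2) (p+1) (2*p) (by omega) (by omega) (by omega) (by omega)
          (by omega) (by omega) (by omega)
  have hat : ∀ c lo hi : ℕ, lo ≤ 2*p → 2*p ≤ hi → fc c lo hi (2*p) = some (c - 2*p) := by
    intro c lo hi h1 h2
    rw [fc_mem]; omega
  have h1n : fc (2*p) p (2*p-1) (2*p) = none := by
    unfold fc; rw [if_neg]; omega
  have d12 : fc (2*p) p (2*p-1) ≠ fc (2*p+1) (p+1) (2*p) := by
    intro h
    have := congrFun h (2*p)
    rw [h1n, hat (2*p+1) (p+1) (2*p) (by omega) le_rfl] at this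
    cases this
  have d13 : fc (2*p) p (2*p-1) ≠ fc (2*p+2) (p+1) (2*p) := by
    intro h
    have := congrFun h (2*p)
    rw [h1n, hat (2*p+2) (p+1) (2*p) (by omega) le_rfl] at this
    cases this
  have d23 : fc (2*p+1) (p+1) (2*p) ≠ fc (2*p+2) (p+1) (2*p) := by
    intro h
    have := congrFun h (2*p)
    rw [hat (2*p+1) (p+1) (2*p) (by omega) le_rfl,
      hat (2*p+2) (p+1) (2*p) (by omega) le_rfl] at this
    simp only [Option.some.injEq] at this
    omega
  have : Nat.card {α : ℕ → Option ℕ //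
      PIso (2 * p) α ∧ PDecr α ∧ PORev α ∧ (PImg α).ncard = p}
      = ({α : ℕ → Option ℕ | PIso (2 * p) α ∧ PDecr α ∧ PORev α ∧ (PImg α).ncard = p}).ncard :=
    Nat.card_coe_set_eq _
  rw [this, hset]
  rw [Set.ncard_insert_of_notMem (by simp [d12, d13]) (Set.toFinite _),
    Set.ncard_pair d23]
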